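/- Define M_{D'}(m,s) := \sum_{n | m} \mu(m/n) (D'/(m/n)) n^{1-s} \sigma_{2s-1}(n). Then for a prime p and integer r \ge 1, the recursion M_{D'}(p^{r+1}, s) = (p^{1-s} + p^{s}) M_{D'}(p^r, s) - p \cdot M_{D'}(p^{r-1}, s) holds. -/
import Mathlib


open scoped BigOperators

/-- The Kronecker symbol at 2: `(a/2)`. -/
def kroneckerAt2 (a : ℤ) : ℤ :=
  if a % 2 = 0 then 0 else if a % 8 = 1 ∨ a % 8 = 7 then 1 else -1

/-- The Kronecker symbol `(a/n)` for a natural number `n`, defined via the Jacobi symbol on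
the odd part of `n` and the symbol `(a/2)` on the 2-part of `n`. -/
def kroneckerSym (a : ℤ) (n : ℕ) : ℤ :=
  kroneckerAt2 a ^ (n.factorization 2) * jacobiSym a (n / 2 ^ (n.factorization 2))

/-- The divisor sum with complex exponent `w`. -/
noncomputable def sigmaC (w : ℂ) (n : ℕ) : ℂ := ∑ d ∈ n.divisors, (d : ℂ) ^ w

/-- `M_D(m,s)`, the twisted divisor sum of the paper. -/
noncomputable def Mfun (D : ℤ) (m : ℕ) (s : ℂ) : ℂ :=
  ∑ n ∈ m.divisors, (ArithmeticFunction.moebius (m / n) : ℂ) *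
    (kroneckerSym D (m / n) : ℂ) * (n : ℂ) ^ (1 - s) * sigmaC (2 * s - 1) n

lemma kroneckerSym_one (a : ℤ) : kroneckerSym a 1 = 1 := by
  simp [kroneckerSym, jacobiSym.one_right]

/-- `(p^j)^w = (p^w)^j` for natural `p`. -/
lemma natCast_pow_cpow (p j : ℕ) (w : ℂ) :
    ((p ^ j : ℕ) : ℂ) ^ w = (((p : ℂ) ^ w) : ℂ) ^ j := by
  push_cast
  rw [← Complex.cpow_nat_mul' (x := (p : ℂ)) (n := j) (by
        simp [Complex.natCast_arg]; positivity) (by simp [Complex.natCast_arg]; positivity) w,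
    Complex.cpow_nat_mul]

/-- auxiliary sequence: `a k = (p^k)^{1-s} σ_{2s-1}(p^k)`. -/
noncomputable def afun (p : ℕ) (s : ℂ) (k : ℕ) : ℂ :=
  ((p ^ k : ℕ) : ℂ) ^ (1 - s) * sigmaC (2 * s - 1) (p ^ k)

lemma afun_eq (p : ℕ) (hp : p.Prime) (s : ℂ) (k : ℕ) :
    afun p s k = ((p : ℂ) ^ (1 - s)) ^ k *
      ∑ j ∈ Finset.range (k + 1), ((p : ℂ) ^ (2 * s - 1)) ^ j := by
  rw [afun, sigmaC, Nat.sum_divisors_prime_pow hp, natCast_pow_cpow]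
  congr 1
  exact Finset.sum_congr rfl fun j _ => natCast_pow_cpow p j _

lemma Mfun_prime_pow (D : ℤ) (p : ℕ) (hp : p.Prime) (s : ℂ) (k : ℕ) :
    Mfun D (p ^ (k + 1)) s = afun p s (k + 1) - (kroneckerSym D p : ℂ) * afun p s k := by
  rw [Mfun, Nat.sum_divisors_prime_pow hp]
  have hdiv : ∀ i ≤ k + 1, p ^ (k + 1) / p ^ i = p ^ (k + 1 - i) := fun i hi =>
    Nat.pow_div hi hp.pos
  rw [Finset.sum_range_succ, Finset.sum_range_succ]
  have h0 : ∑ i ∈ Finset.range k, (ArithmeticFunction.moebius (p ^ (k + 1) / p ^ i) : ℂ) *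
      (kroneckerSym D (p ^ (k + 1) / p ^ i) : ℂ) * ((p ^ i : ℕ) : ℂ) ^ (1 - s) *
      sigmaC (2 * s - 1) (p ^ i) = 0 := by
    refine Finset.sum_eq_zero fun i hi => ?_
    rw [Finset.mem_range] at hi
    rw [hdiv i (by omega), ArithmeticFunction.moebius_apply_prime_pow hp (by omega),
      if_neg (by omega)]
    simp
  rw [h0, hdiv k (by omega), hdiv (k + 1) (le_refl _)]
  simp only [Nat.sub_self, pow_zero, Nat.add_sub_cancel_left, ArithmeticFunction.moebius_apply_one]
  rw [pow_one, ArithmeticFunction.moebius_apply_prime hp, kroneckerSym_one]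
  unfold afun
  push_cast
  ring

lemma afun_zero (p : ℕ) (hp : p.Prime) (s : ℂ) : afun p s 0 = 1 := by
  rw [afun_eq p hp]
  simp

lemma afun_one (p : ℕ) (hp : p.Prime) (s : ℂ) :
    afun p s 1 = (p : ℂ) ^ (1 - s) + (p : ℂ) ^ s := by
  have hq : (p : ℂ) ^ (1 - s) * (p : ℂ) ^ (2 * s - 1) = (p : ℂ) ^ s := by
    rw [← Complex.cpow_add _ _ (by exact_mod_cast hp.ne_zero)]
    ring_nf
  rw [afun_eq p hp]
  simp [Finset.sum_range_succ]
  linear_combination hq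

lemma afun_rec (p : ℕ) (hp : p.Prime) (s : ℂ) (k : ℕ) :
    afun p s (k + 2) = ((p : ℂ) ^ (1 - s) + (p : ℂ) ^ s) * afun p s (k + 1) -
      (p : ℂ) * afun p s k := by
  have hpne : (p : ℂ) ≠ 0 := by exact_mod_cast hp.ne_zero
  have hq : (p : ℂ) ^ (1 - s) * (p : ℂ) ^ (2 * s - 1) = (p : ℂ) ^ s := by
    rw [← Complex.cpow_add _ _ hpne]; ring_nf
  have hu : (p : ℂ) ^ (1 - s) * (p : ℂ) ^ s = (p : ℂ) := by
    rw [← Complex.cpow_add _ _ hpne]; ring_nf; rw [Complex.cpow_one]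
  rw [afun_eq p hp, afun_eq p hp, afun_eq p hp]
  rw [Finset.sum_range_succ ((((p:ℂ)^(2*s-1))^·)) (k + 2),
    Finset.sum_range_succ ((((p:ℂ)^(2*s-1))^·)) (k + 1)]
  set t := (p : ℂ) ^ (1 - s)
  set u := (p : ℂ) ^ s
  set q := (p : ℂ) ^ (2 * s - 1)
  set S := ∑ j ∈ Finset.range (k + 1), q ^ j
  linear_combination (-(t ^ k * S)) * hu + (t ^ (k + 1) * q ^ (k + 1)) * hq

lemma Mfun_one (D : ℤ) (s : ℂ) : Mfun D 1 s = 1 := by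
  rw [Mfun]
  simp [Nat.divisors_one, kroneckerSym_one, sigmaC]

/-- The recursion for `M` at prime powers. -/
theorem Mfun_prime_pow_recursion (D' : ℤ) (p : ℕ) (hp : p.Prime) (r : ℕ) (hr : 1 ≤ r)
    (s : ℂ) :
    Mfun D' (p ^ (r + 1)) s =
      ((p : ℂ) ^ (1 - s) + (p : ℂ) ^ s) * Mfun D' (p ^ r) s -
        (p : ℂ) * Mfun D' (p ^ (r - 1)) s := by
  obtain ⟨m, rfl⟩ : ∃ m, r = m + 1 := ⟨r - 1, by omega⟩
  simp only [Nat.add_sub_cancel]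
  cases m with
  | zero =>
    rw [pow_zero, Mfun_one, Mfun_prime_pow D' p hp s 1, Mfun_prime_pow D' p hp s 0,
      afun_rec p hp s 0, afun_one p hp, afun_zero p hp]
    ring
  | succ n =>
    rw [Mfun_prime_pow D' p hp s (n + 2), Mfun_prime_pow D' p hp s (n + 1),
      Mfun_prime_pow D' p hp s n, afun_rec p hp s (n + 1), afun_rec p hp s n]
    ring
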